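/- Let N ≥ 1 and let Π : ℝ → M_N(ℂ) be continuously differentiable with Π(x)² = Π(x) and Π(x) Hermitian for every x. Let ξ : ℝ → ℝ, and let χ, χ̃ : ℝ × ℝ → ℂ^N be C¹ maps such that Π(x)χ(t,x) = χ(t,x) and Π(x)χ̃(t,x) = χ̃(t,x) for all (t,x), and such that χ satisfies the transport equation ∂_tχ(t,x) + ξ(t) ∂_xχ(t,x) = −ξ(t) [Π(x), Π′(x)] χ(t,x). Then for all (t,x): ⟨χ̃(t,x), ∂_tχ(t,x) + ξ(t) ∂_xχ(t,x)⟩_{ℂ^N} = 0. -/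

import Mathlib

lemma toEuclideanLin_mul_apply {N : ℕ} (A B : Matrix (Fin N) (Fin N) ℂ)
    (v : EuclideanSpace ℂ (Fin N)) :
    Matrix.toEuclideanLin (A * B) v = Matrix.toEuclideanLin A (Matrix.toEuclideanLin B v) := by
  simp [Matrix.toEuclideanLin_apply, Matrix.mulVec_mulVec]

/-- the parallel-transport orthogonality relation (eq:eigenvector).
If `χ, χ̃` are sections of the range of the C¹ orthogonal projector family `Π`,
and `χ` satisfies `∂_tχ + ξ(t)∂_xχ = −ξ(t)[Π(x), Π'(x)]χ`, then
`⟨χ̃, ∂_tχ + ξ(t)∂_xχ⟩ = 0` pointwise. -/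
theorem parallel_transport_orthogonality
    (N : ℕ) (hN : 1 ≤ N)
    (Pi : ℝ → Matrix (Fin N) (Fin N) ℂ)
    (hPiC1 : ∀ i j : Fin N, ContDiff ℝ 1 fun w => Pi w i j)
    (hproj : ∀ w : ℝ, Pi w * Pi w = Pi w)
    (hherm : ∀ w : ℝ, (Pi w).IsHermitian)
    (ξ : ℝ → ℝ)
    (χ χt : ℝ → ℝ → EuclideanSpace ℂ (Fin N))
    (hχC1 : ContDiff ℝ 1 fun p : ℝ × ℝ => χ p.1 p.2)
    (hχtC1 : ContDiff ℝ 1 fun p : ℝ × ℝ => χt p.1 p.2)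
    (hχrange : ∀ t x : ℝ, Matrix.toEuclideanLin (Pi x) (χ t x) = χ t x)
    (hχtrange : ∀ t x : ℝ, Matrix.toEuclideanLin (Pi x) (χt t x) = χt t x)
    (htransport : ∀ t x : ℝ,
      deriv (fun s => χ s x) t + ξ t • deriv (fun y => χ t y) x
        = -(ξ t) • Matrix.toEuclideanLin
            (Pi x * (Matrix.of fun i j : Fin N => deriv (fun v => Pi v i j) x)
              - (Matrix.of fun i j : Fin N => deriv (fun v => Pi v i j) x) * Pi x)
            (χ t x)) :
    ∀ t x : ℝ,
      (inner ℂ (χt t x) (deriv (fun s => χ s x) t + ξ t • deriv (fun y => χ t y) x) : ℂ) = 0 := by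
  intro t x
  rw [htransport t x]
  set Q : Matrix (Fin N) (Fin N) ℂ :=
    Matrix.of fun i j : Fin N => deriv (fun v => Pi v i j) x with hQ
  set M : Matrix (Fin N) (Fin N) ℂ := Pi x * Q - Q * Pi x with hM
  have hPMP : Pi x * (M * Pi x) = 0 := by
    have h := hproj x
    have : Pi x * (M * Pi x) = (Pi x * Pi x) * (Q * Pi x) - Pi x * Q * (Pi x * Pi x) := by
      rw [hM]; noncomm_ring
    rw [this, h]; noncomm_ring
  have hadj : ∀ v w : EuclideanSpace ℂ (Fin N),
      (inner ℂ (Matrix.toEuclideanLin (Pi x) v) w : ℂ)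
        = inner ℂ v (Matrix.toEuclideanLin (Pi x) w) := by
    intro v w
    conv_rhs => rw [← (hherm x).eq]
    rw [Matrix.toEuclideanLin_conjTranspose_eq_adjoint, LinearMap.adjoint_inner_right]
  have key : (inner ℂ (χt t x) (Matrix.toEuclideanLin M (χ t x)) : ℂ) = 0 := by
    conv_lhs => rw [← hχtrange t x, ← hχrange t x, ← toEuclideanLin_mul_apply]
    rw [hadj, ← toEuclideanLin_mul_apply, hPMP]
    simp
  rw [inner_smul_right_eq_smul, key, smul_zero]
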